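/- Let n ≥ 1 be an integer, N an integer with 0 ≤ N ≤ n−1, and a₁,…,a_N ≥ 0 real numbers. Let U ⊂ ℂⁿ be the open unit polydisk and ψ(z) = log(|z_n|² ∏_{k=1}^N |z_k|^{2a_k}). Let g : ℂ^{n−1} → ℝ be continuous with compact support contained in {z′ : |z′_i| < 1 for all i, and z′_k ≠ 0 for 1 ≤ k ≤ N}, and define g̃ : ℂⁿ → ℝ by g̃(z′, z_n) = g(z′)(1 − |z_n|) for |z_n| ≤ 1 and g̃ = 0 otherwise. Write A(z′) = ∏_{k=1}^N |z′_k|^{a_k}. Then there exists t₀ < 0 such that for all t ≤ t₀, ∫_{U ∩ {t < ψ < t+1}} g̃ e^{−ψ} dλ_{2n} = π ∫_{ℂ^{n−1}} g(z′) A(z′)^{−2} dλ_{2n−2}(z′) − 2π(√e − 1) e^{t/2} ∫_{ℂ^{n−1}} g(z′) A(z′)^{−3} dλ_{2n−2}(z′). -/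

import Mathlib

open MeasureTheory Filter Real

section AuxLemmas
open Set

private lemma radial_integral (r₁ r₂ : ℝ) (h1 : 0 < r₁) (h12 : r₁ ≤ r₂) :
    ∫ w : ℂ, Set.indicator {w : ℂ | r₁ < ‖w‖ ∧ ‖w‖ < r₂}
      (fun w => (1 - ‖w‖) / (‖w‖)^2) w
    = 2*π*((Real.log (r₂/r₁)) - (r₂ - r₁)) := by
  set f : ℝ → ℝ := fun r => Set.indicator (Set.Ioo r₁ r₂) (fun r => (1-r)/r^2) r with hf
  have key : ∀ w : ℂ, Set.indicator {w : ℂ | r₁ < ‖w‖ ∧ ‖w‖ < r₂}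
      (fun w => (1 - ‖w‖) / (‖w‖)^2) w = f ‖w‖ := by
    intro w
    have habs : ‖w‖ = ‖w‖ := rfl
    simp only [hf, Set.indicator_apply, Set.mem_setOf_eq, Set.mem_Ioo, habs]
  simp only [key]
  rw [integral_fun_norm_addHaar (volume : Measure ℂ) f]
  rw [Complex.finrank_real_complex]
  have hball : volume.real (Metric.ball (0:ℂ) 1) = π := by
    simp [Measure.real, Complex.volume_ball]
  rw [hball]
  have hsub : Set.Ioo r₁ r₂ ⊆ Set.Ioi (0:ℝ) :=
    Set.Ioo_subset_Ioi_self.trans (Set.Ioi_subset_Ioi h1.le)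
  have h2 : ∫ y in Ioi (0:ℝ), y ^ (2 - 1) • f y
      = ∫ y in Ioo r₁ r₂, (y⁻¹ - 1) := by
    have hpt : ∀ y : ℝ, y ^ (2-1) • f y
        = Set.indicator (Set.Ioo r₁ r₂) (fun y => y * ((1-y)/y^2)) y := by
      intro y
      by_cases h : y ∈ Set.Ioo r₁ r₂
      · simp [hf, Set.indicator_of_mem h]
      · simp [hf, Set.indicator_of_notMem h]
    simp only [hpt]
    rw [integral_indicator measurableSet_Ioo, Measure.restrict_restrict measurableSet_Ioo,
      Set.inter_eq_self_of_subset_left hsub]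
    apply setIntegral_congr_fun measurableSet_Ioo
    intro y hy
    have hy0 : y ≠ 0 := (lt_trans h1 hy.1).ne'
    field_simp
  rw [h2]
  have h3 : ∫ y in Ioo r₁ r₂, (y⁻¹ - 1) = Real.log (r₂/r₁) - (r₂ - r₁) := by
    rw [← integral_Ioc_eq_integral_Ioo, ← intervalIntegral.integral_of_le h12]
    rw [intervalIntegral.integral_sub]
    · rw [integral_inv_of_pos h1 (lt_of_lt_of_le h1 h12)]
      simp
    · refine (continuousOn_inv₀.mono ?_).intervalIntegrable
      rw [Set.uIcc_of_le h12]
      intro x hx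
      exact (lt_of_lt_of_le h1 hx.1).ne'
    · exact intervalIntegrable_const
  rw [h3]
  simp [smul_eq_mul]
  ring

private lemma inner_eval (B t : ℝ) (hB : 0 < B) :
    ∫ w : ℂ, Set.indicator {w : ℂ | Real.exp t < ‖w‖ ^ 2 * B^2
        ∧ ‖w‖ ^ 2 * B^2 < Real.exp (t+1)}
      (fun w => (1 - ‖w‖) * (‖w‖ ^ 2 * B^2)⁻¹) w
    = π * (B^2)⁻¹ - 2*π*(Real.sqrt (Real.exp 1) - 1) * Real.exp (t/2) * (B^3)⁻¹ := by
  set r₁ : ℝ := Real.exp (t/2) / B with hr₁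
  set r₂ : ℝ := Real.exp ((t+1)/2) / B with hr₂
  have hr₁0 : 0 < r₁ := div_pos (Real.exp_pos _) hB
  have hr₁₂ : r₁ ≤ r₂ := by
    apply div_le_div_of_nonneg_right ?_ hB.le
    exact Real.exp_le_exp.mpr (by linarith)
  have sqkey : ∀ x s : ℝ, 0 ≤ x → (Real.exp s < x^2*B^2 ↔ Real.exp (s/2)/B < x) := by
    intro x s hx
    rw [div_lt_iff₀ hB, show x^2*B^2 = (x*B)^2 by ring,
      show Real.exp s = (Real.exp (s/2))^2 by rw [sq, ← Real.exp_add, add_halves],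
      pow_lt_pow_iff_left₀ (Real.exp_pos _).le (mul_nonneg hx hB.le) two_ne_zero]
  have sqkey' : ∀ x s : ℝ, 0 ≤ x → (x^2*B^2 < Real.exp s ↔ x < Real.exp (s/2)/B) := by
    intro x s hx
    rw [lt_div_iff₀ hB, show x^2*B^2 = (x*B)^2 by ring,
      show Real.exp s = (Real.exp (s/2))^2 by rw [sq, ← Real.exp_add, add_halves],
      pow_lt_pow_iff_left₀ (mul_nonneg hx hB.le) (Real.exp_pos _).le two_ne_zero]
  have hsets : {w : ℂ | Real.exp t < ‖w‖ ^ 2 * B^2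
        ∧ ‖w‖ ^ 2 * B^2 < Real.exp (t+1)}
      = {w : ℂ | r₁ < ‖w‖ ∧ ‖w‖ < r₂} := by
    ext w
    simp only [Set.mem_setOf_eq, sqkey _ t (norm_nonneg w),
      sqkey' _ (t+1) (norm_nonneg w), hr₁, hr₂]
  have hfun : ∀ w : ℂ, (1 - ‖w‖) * (‖w‖ ^ 2 * B^2)⁻¹
      = (B^2)⁻¹ * ((1 - ‖w‖) / (‖w‖)^2) := by
    intro w
    rw [mul_inv, div_eq_mul_inv]
    ring
  simp only [hsets, hfun]
  rw [show (Set.indicator {w : ℂ | r₁ < ‖w‖ ∧ ‖w‖ < r₂}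
      (fun w => (B^2)⁻¹ * ((1 - ‖w‖) / (‖w‖)^2)))
    = (fun w => (B^2)⁻¹ * Set.indicator {w : ℂ | r₁ < ‖w‖ ∧ ‖w‖ < r₂}
      (fun w => (1 - ‖w‖) / (‖w‖)^2) w) from
      funext fun w => Set.indicator_const_mul _ _ _ w]
  rw [integral_const_mul, radial_integral r₁ r₂ hr₁0 hr₁₂]
  have hlog : Real.log (r₂/r₁) = 1/2 := by
    rw [Real.log_div (lt_of_lt_of_le hr₁0 hr₁₂).ne' hr₁0.ne', hr₁, hr₂,
      Real.log_div (Real.exp_ne_zero _) hB.ne', Real.log_div (Real.exp_ne_zero _) hB.ne',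
      Real.log_exp, Real.log_exp]
    ring
  have hdiff : r₂ - r₁ = (Real.sqrt (Real.exp 1) - 1) * Real.exp (t/2) / B := by
    rw [hr₁, hr₂, div_sub_div_same, show (t+1)/2 = t/2 + 1/2 by ring, Real.exp_add,
      show Real.exp (1/2) = Real.sqrt (Real.exp 1) from Real.exp_half 1]
    ring
  rw [hlog, hdiff]
  field_simp

private lemma aux_integrable {m : ℕ} (g : (Fin m → ℂ) → ℝ) (hg : Continuous g)
    (hgsupp : HasCompactSupport g) (V : Set (Fin m → ℂ)) (hV : IsOpen V)
    (hsub : tsupport g ⊆ V) (u : (Fin m → ℂ) → ℝ) (hu : ContinuousOn u V) :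
    Integrable (fun z => g z * u z) := by
  have hcont : Continuous (fun z => g z * u z) := by
    rw [continuous_iff_continuousAt]; intro x
    by_cases hx : x ∈ V
    · exact ((hg.continuousOn.mul hu).continuousAt (hV.mem_nhds hx))
    · have hx' : x ∉ tsupport g := fun h => hx (hsub h)
      have h0 : (fun z => g z * u z) =ᶠ[nhds x] (fun _ => 0) := by
        filter_upwards [(isClosed_tsupport g).isOpen_compl.mem_nhds hx'] with y hy
        simp [image_eq_zero_of_notMem_tsupport hy]
      exact h0.continuousAt
  exact hcont.integrable_of_hasCompactSupport (hgsupp.mul_right)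

/-- Step 2 in the proof of Lemma 3.4 of the paper: exact evaluation of the
integral `∫_{U ∩ {t < ψ < t+1}} g̃ e^{-ψ}` for the particular extension
`g̃(z', z_n) = g(z') (1 - |z_n|)` (for `|z_n| ≤ 1`, and `0` otherwise), valid
for all sufficiently negative `t`.  Here `A(z') = ∏_{k<N} |z'_k|^{a_k}`. -/
theorem ohsawa_measure_snc_model_exact_evaluation
    (n N : ℕ) (hn : 1 ≤ n) (hN : N ≤ n - 1)
    (a : Fin N → ℝ) (ha : ∀ k, 0 ≤ a k)
    (ψ : (Fin n → ℂ) → ℝ)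
    (hψ : ∀ z : Fin n → ℂ, ψ z =
      Real.log ((‖(z ⟨n - 1, by omega⟩)‖) ^ 2 *
        ∏ k : Fin N, ‖(z (Fin.castLE (hN.trans (Nat.sub_le n 1)) k))‖ ^ (2 * a k)))
    (g : (Fin (n - 1) → ℂ) → ℝ)
    (hg : Continuous g) (hgsupp : HasCompactSupport g)
    (hgsub : tsupport g ⊆ {z' : Fin (n - 1) → ℂ |
      (∀ i, ‖(z' i)‖ < 1) ∧ ∀ k : Fin N, z' (Fin.castLE hN k) ≠ 0})
    (gext : (Fin n → ℂ) → ℝ)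
    (hgext : ∀ z : Fin n → ℂ, gext z =
      if ‖(z ⟨n - 1, by omega⟩)‖ ≤ 1 then
        g (fun i : Fin (n - 1) => z ⟨i, lt_of_lt_of_le i.isLt (Nat.sub_le n 1)⟩) *
          (1 - ‖(z ⟨n - 1, by omega⟩)‖)
      else 0)
    (A : (Fin (n - 1) → ℂ) → ℝ)
    (hA : ∀ z' : Fin (n - 1) → ℂ,
      A z' = ∏ k : Fin N, ‖(z' (Fin.castLE hN k))‖ ^ (a k)) :
    ∃ t₀ : ℝ, t₀ < 0 ∧ ∀ t ≤ t₀,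
      (∫ z in {z : Fin n → ℂ | (∀ i, ‖(z i)‖ < 1) ∧
          t < ψ z ∧ ψ z < t + 1}, gext z * Real.exp (-ψ z))
        = π * (∫ z' : Fin (n - 1) → ℂ, g z' * (A z') ^ (-(2:ℝ)))
          - 2 * π * (Real.sqrt (Real.exp 1) - 1) * Real.exp (t / 2) *
            (∫ z' : Fin (n - 1) → ℂ, g z' * (A z') ^ (-(3:ℝ))) := by
  obtain ⟨m, rfl⟩ : ∃ m, n = m + 1 := ⟨n - 1, by omega⟩
  -- basic conversions
  have hNm : N ≤ m := hN
  -- the open set V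
  set V : Set (Fin m → ℂ) := {z' : Fin m → ℂ |
      (∀ i, ‖(z' i)‖ < 1) ∧ ∀ k : Fin N, z' (Fin.castLE hN k) ≠ 0} with hV_def
  have hVopen : IsOpen V := by
    have h1 : IsOpen {z' : Fin m → ℂ | ∀ i, ‖(z' i)‖ < 1} := by
      rw [Set.setOf_forall]
      exact isOpen_iInter_of_finite fun i =>
        IsOpen.preimage (continuous_norm.comp (continuous_apply i)) isOpen_Iio
    have h2 : IsOpen {z' : Fin m → ℂ | ∀ k : Fin N, z' (Fin.castLE hN k) ≠ 0} := by
      rw [Set.setOf_forall]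
      exact isOpen_iInter_of_finite fun k =>
        IsOpen.preimage (continuous_apply _) isOpen_compl_singleton
    rw [hV_def, Set.setOf_and]
    exact h1.inter h2
  have hgsubV : tsupport g ⊆ V := hgsub
  -- A is continuous and positive on V
  have hA_cont : ContinuousOn A V := by
    have hAfun : A = fun z' => ∏ k : Fin N, ‖(z' (Fin.castLE hN k))‖ ^ (a k) :=
      funext hA
    rw [hAfun]
    apply continuousOn_finset_prod
    intro k _
    intro z' hz'
    apply ContinuousAt.continuousWithinAt
    exact ContinuousAt.comp
      (Real.continuousAt_rpow_const _ _ (Or.inl (by simpa using hz'.2 k)))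
      ((continuous_norm.comp (continuous_apply _)).continuousAt)
  have hA_pos : ∀ z' ∈ V, 0 < A z' := by
    intro z' hz'
    rw [hA]
    apply Finset.prod_pos
    intro k _
    exact Real.rpow_pos_of_pos (by simpa using hz'.2 k) _
  -- lower bound for A on the support of g
  obtain ⟨c, hc_pos, hc_le⟩ : ∃ c : ℝ, 0 < c ∧ ∀ z' ∈ tsupport g, c ≤ A z' := by
    rcases Set.eq_empty_or_nonempty (tsupport g) with h | h
    · exact ⟨1, one_pos, by simp [h]⟩
    · obtain ⟨z₀, hz₀, hmin⟩ := hgsupp.exists_isMinOn h (hA_cont.mono hgsubV)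
      exact ⟨A z₀, hA_pos z₀ (hgsubV hz₀), fun z' hz' => hmin hz'⟩
  -- A squared
  have hA2 : ∀ z' : Fin m → ℂ,
      (∏ k : Fin N, ‖(z' (Fin.castLE hN k))‖ ^ (2 * a k)) = (A z') ^ 2 := by
    intro z'
    rw [hA, ← Finset.prod_pow]
    apply Finset.prod_congr rfl
    intro k _
    rw [← Real.rpow_natCast (‖(z' (Fin.castLE hN k))‖ ^ (a k)) 2,
      ← Real.rpow_mul (norm_nonneg _)]
    norm_num [mul_comm]
  refine ⟨min (-1) (2 * Real.log c - 1),
    lt_of_le_of_lt (min_le_left _ _) (by norm_num), ?_⟩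
  intro t ht
  have ht1 : t + 1 ≤ 0 := by
    have := min_le_left (-1) (2 * Real.log c - 1); linarith [le_trans ht this]
  have htc : Real.exp (t + 1) ≤ c ^ 2 := by
    have h1 : t + 1 ≤ 2 * Real.log c := by
      have := min_le_right (-1) (2 * Real.log c - 1); linarith [le_trans ht this]
    calc Real.exp (t+1) ≤ Real.exp (2 * Real.log c) := Real.exp_le_exp.mpr h1
      _ = c ^ 2 := by
        rw [two_mul, Real.exp_add, Real.exp_log hc_pos, sq]
  -- the measurable equivalence
  set e := MeasurableEquiv.piFinSuccAbove (fun _ : Fin (m+1) => ℂ) (Fin.last m) with he_def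
  have hesymm : ∀ (w : ℂ) (z' : Fin m → ℂ),
      e.symm (w, z') = Fin.insertNth (Fin.last m) w z' := fun w z' => rfl
  have heval_last : ∀ (w : ℂ) (z' : Fin m → ℂ) (j : Fin (m+1)) (hj : (j:ℕ) = m),
      e.symm (w, z') j = w := by
    intro w z' j hj
    rw [hesymm, show j = Fin.last m from Fin.ext hj]
    exact Fin.insertNth_apply_same _ _ _
  have heval_cast : ∀ (w : ℂ) (z' : Fin m → ℂ) (j : Fin (m+1)) (hj : (j:ℕ) < m),
      e.symm (w, z') j = z' ⟨j, hj⟩ := by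
    intro w z' j hj
    have h1 : j = (Fin.last m).succAbove ⟨j, hj⟩ := by
      rw [Fin.succAbove_last]; exact Fin.ext rfl
    rw [hesymm]
    conv_lhs => rw [h1]
    exact Fin.insertNth_apply_succAbove _ _ _ _
  -- evaluation of ψ through the equivalence
  have hψ_eval : ∀ (w : ℂ) (z' : Fin m → ℂ),
      ψ (e.symm (w, z')) = Real.log (‖w‖ ^ 2 * (A z') ^ 2) := by
    intro w z'
    rw [hψ (e.symm (w, z'))]
    rw [heval_last w z']
    swap; · rfl
    have h2 : (∏ k : Fin N, ‖(e.symm (w, z')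
        (Fin.castLE (hN.trans (Nat.sub_le (m+1) 1)) k))‖ ^ (2 * a k)) = (A z') ^ 2 := by
      rw [← hA2 z']
      apply Finset.prod_congr rfl
      intro k _
      congr 1
      exact congrArg (‖·‖) (heval_cast w z' _ (lt_of_lt_of_le k.isLt hNm))
    rw [h2]
  -- evaluation of gext through the equivalence
  have hgext_eval : ∀ (w : ℂ) (z' : Fin m → ℂ),
      gext (e.symm (w, z')) = if ‖w‖ ≤ 1 then g z' * (1 - ‖w‖) else 0 := by
    intro w z'
    rw [hgext (e.symm (w, z'))]
    rw [heval_last w z']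
    swap; · rfl
    have hg_arg : (fun i : Fin (m+1-1) => e.symm (w, z')
        ⟨i, lt_of_lt_of_le i.isLt (Nat.sub_le (m+1) 1)⟩) = z' := by
      funext i
      exact heval_cast w z' _ i.isLt
    rw [hg_arg]
  -- the integration set
  set S : Set (Fin (m+1) → ℂ) := {z : Fin (m+1) → ℂ | (∀ i, ‖(z i)‖ < 1) ∧
      t < ψ z ∧ ψ z < t + 1} with hS_def
  set F : (Fin (m+1) → ℂ) → ℝ := Set.indicator S (fun z => gext z * Real.exp (-ψ z)) with hF_def
  -- the key pointwise identity
  have hFkey : ∀ (w : ℂ) (z' : Fin m → ℂ),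
      F (e.symm (w, z')) = g z' *
        Set.indicator {w : ℂ | Real.exp t < ‖w‖ ^ 2 * (A z')^2
          ∧ ‖w‖ ^ 2 * (A z')^2 < Real.exp (t+1)}
        (fun w => (1 - ‖w‖) * (‖w‖ ^ 2 * (A z')^2)⁻¹) w := by
    intro w z'
    by_cases hgz : g z' = 0
    · rw [hgz, zero_mul, hF_def]
      by_cases hmem : e.symm (w, z') ∈ S
      · rw [Set.indicator_of_mem hmem, hgext_eval, hgz]
        simp
      · rw [Set.indicator_of_notMem hmem]
    · have hz'V : z' ∈ V := hgsubV (subset_closure hgz)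
      have hApos : 0 < A z' := hA_pos z' hz'V
      have hcA : c ≤ A z' := hc_le z' (subset_closure hgz)
      by_cases hw : Real.exp t < ‖w‖ ^ 2 * (A z')^2
          ∧ ‖w‖ ^ 2 * (A z')^2 < Real.exp (t+1)
      · have hx_pos : 0 < ‖w‖ ^2 * (A z')^2 := lt_trans (Real.exp_pos t) hw.1
        have hw1 : ‖w‖ < 1 := by
          have hc2 : c^2 ≤ (A z')^2 := by nlinarith
          have h1 : ‖w‖ ^2 * (A z')^2 < (A z')^2 :=
            lt_of_lt_of_le hw.2 (le_trans htc hc2)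
          have hA2pos : 0 < (A z')^2 := by positivity
          have hw2 : ‖w‖ ^ 2 < 1 :=
            lt_of_mul_lt_mul_right (by linarith) hA2pos.le
          nlinarith [norm_nonneg w]
        have hmem : e.symm (w, z') ∈ S := by
          refine ⟨?_, ?_, ?_⟩
          · intro i
            refine Fin.lastCases ?_ ?_ i
            · rw [heval_last w z' _ rfl]
              exact hw1
            · intro j
              rw [heval_cast w z' _ (by simpa using j.isLt)]
              exact hz'V.1 _
          · rw [hψ_eval w z']
            exact (Real.lt_log_iff_exp_lt hx_pos).mpr hw.1
          · rw [hψ_eval w z']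
            exact (Real.log_lt_iff_lt_exp hx_pos).mpr hw.2
        have hwmem : w ∈ {w : ℂ | Real.exp t < ‖w‖ ^ 2 * (A z')^2
          ∧ ‖w‖ ^ 2 * (A z')^2 < Real.exp (t+1)} := hw
        rw [hF_def, Set.indicator_of_mem hmem, Set.indicator_of_mem hwmem, hgext_eval,
          if_pos hw1.le, hψ_eval, Real.exp_neg, Real.exp_log hx_pos]
        ring
      · have hnmem : e.symm (w, z') ∉ S := by
          intro hmem
          obtain ⟨_, hψ1, hψ2⟩ := hmem
          rw [hψ_eval w z'] at hψ1 hψ2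
          have hx0 : 0 ≤ ‖w‖ ^2 * (A z')^2 := by positivity
          rcases eq_or_lt_of_le hx0 with h | h
          · rw [← h, Real.log_zero] at hψ2
            linarith
          · exact hw ⟨(Real.lt_log_iff_exp_lt h).mp hψ1, (Real.log_lt_iff_lt_exp h).mp hψ2⟩
        have hwn : w ∉ {w : ℂ | Real.exp t < ‖w‖ ^ 2 * (A z')^2
          ∧ ‖w‖ ^ 2 * (A z')^2 < Real.exp (t+1)} := hw
        rw [hF_def, Set.indicator_of_notMem hnmem, Set.indicator_of_notMem hwn, mul_zero]
  -- measurability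
  have hψm : Measurable ψ := by
    have hfeq := funext hψ
    rw [hfeq]
    apply Real.measurable_log.comp
    apply Measurable.mul
    · exact ((continuous_norm.measurable).comp (measurable_pi_apply _)).pow_const 2
    · apply Finset.measurable_prod
      intro k _
      exact ((Real.continuous_rpow_const (mul_nonneg (by norm_num) (ha k))).comp
        (continuous_norm.comp (continuous_apply _))).measurable
  have hgextm : Measurable gext := by
    have hfeq := funext hgext
    rw [hfeq]
    apply Measurable.ite
    · exact measurableSet_le ((continuous_norm.measurable).comp (measurable_pi_apply _))
        measurable_const
    · exact ((hg.measurable).comp (measurable_pi_lambda _ fun i => measurable_pi_apply _)).mul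
        (measurable_const.sub ((continuous_norm.measurable).comp (measurable_pi_apply _)))
    · exact measurable_const
  have hSm : MeasurableSet S := by
    rw [hS_def, Set.setOf_and, Set.setOf_and]
    refine MeasurableSet.inter ?_ (MeasurableSet.inter ?_ ?_)
    · rw [Set.setOf_forall]
      exact MeasurableSet.iInter fun i => measurableSet_lt
        ((continuous_norm.measurable).comp (measurable_pi_apply i)) measurable_const
    · exact measurableSet_lt measurable_const hψm
    · exact measurableSet_lt hψm measurable_const
  have hFm : Measurable F := by
    rw [hF_def]
    exact (hgextm.mul (Real.measurable_exp.comp hψm.neg)).indicator hSm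
  have hΦm : Measurable (fun p : ℂ × (Fin m → ℂ) => F (e.symm p)) :=
    hFm.comp e.symm.measurable
  -- bound
  obtain ⟨Mg, hMg⟩ := hg.bounded_above_of_compact_support hgsupp
  have hMg0 : 0 ≤ Mg := le_trans (norm_nonneg _) (hMg (fun _ => 0))
  have hgext_bd : ∀ z, |gext z| ≤ Mg := by
    intro z
    rw [hgext z]
    split
    · rename_i hb
      have h0 : (0:ℝ) ≤ ‖(z ⟨m + 1 - 1, by omega⟩)‖ := norm_nonneg _
      rw [abs_mul]
      calc |g _| * |1 - ‖(z ⟨m + 1 - 1, by omega⟩)‖| ≤ Mg * 1 := by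
            apply mul_le_mul ?_ ?_ (abs_nonneg _) hMg0
            · rw [← Real.norm_eq_abs]; exact hMg _
            · rw [abs_of_nonneg (by linarith)]; linarith
        _ = Mg := mul_one Mg
    · simpa using hMg0
  have hbd : ∀ p : ℂ × (Fin m → ℂ), ‖F (e.symm p)‖ ≤ Mg * Real.exp (-t) := by
    intro p
    rw [hF_def]
    by_cases hmem : e.symm p ∈ S
    · rw [Set.indicator_of_mem hmem, Real.norm_eq_abs, abs_mul,
        abs_of_pos (Real.exp_pos _)]
      apply mul_le_mul (hgext_bd _) ?_ (Real.exp_pos _).le hMg0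
      exact Real.exp_le_exp.mpr (by linarith [hmem.2.1])
    · rw [Set.indicator_of_notMem hmem]
      simpa using mul_nonneg hMg0 (Real.exp_pos (-t)).le
  -- support
  have hsupp0 : ∀ p : ℂ × (Fin m → ℂ),
      p ∉ (Metric.closedBall (0:ℂ) 1) ×ˢ tsupport g → F (e.symm p) = 0 := by
    rintro ⟨w, z'⟩ hp
    rw [Set.mem_prod] at hp
    push_neg at hp
    by_cases hz' : z' ∈ tsupport g
    · have hwball : w ∉ Metric.closedBall (0:ℂ) 1 := fun h => hp h hz'
      have hw1 : 1 < ‖w‖ := by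
        rw [Metric.mem_closedBall, Complex.dist_eq, sub_zero] at hwball
        linarith [not_le.mp hwball]
      rw [hFkey w z']
      have hwn : w ∉ {w : ℂ | Real.exp t < ‖w‖ ^ 2 * (A z')^2
          ∧ ‖w‖ ^ 2 * (A z')^2 < Real.exp (t+1)} := by
        intro hw
        have hcA : c ≤ A z' := hc_le z' hz'
        have hc2 : c^2 ≤ (A z')^2 := by nlinarith
        have h1 : ‖w‖ ^2 * (A z')^2 < (A z')^2 :=
          lt_of_lt_of_le hw.2 (le_trans htc hc2)
        have hApos : 0 < A z' := lt_of_lt_of_le hc_pos hcA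
        have hA2pos : 0 < (A z')^2 := by positivity
        have hw2 : ‖w‖ ^ 2 < 1 :=
          lt_of_mul_lt_mul_right (by linarith) hA2pos.le
        nlinarith
      rw [Set.indicator_of_notMem hwn, mul_zero]
    · rw [hFkey w z', image_eq_zero_of_notMem_tsupport hz', zero_mul]
  -- integrability
  have hΦint : Integrable (fun p : ℂ × (Fin m → ℂ) => F (e.symm p))
      ((volume : Measure ℂ).prod (volume : Measure (Fin m → ℂ))) := by
    have hT : MeasurableSet ((Metric.closedBall (0:ℂ) 1) ×ˢ tsupport g) :=
      measurableSet_closedBall.prod (isClosed_tsupport g).measurableSet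
    have hTfin : ((volume : Measure ℂ).prod (volume : Measure (Fin m → ℂ)))
        ((Metric.closedBall (0:ℂ) 1) ×ˢ tsupport g) ≠ ⊤ := by
      rw [Measure.prod_prod]
      exact ENNReal.mul_ne_top measure_closedBall_lt_top.ne hgsupp.measure_lt_top.ne
    have heq : (fun p : ℂ × (Fin m → ℂ) => F (e.symm p))
        = Set.indicator ((Metric.closedBall (0:ℂ) 1) ×ˢ tsupport g)
          (fun p => F (e.symm p)) :=
      funext fun p => (Set.indicator_apply_eq_self.mpr
        (fun h => hsupp0 p h) :
        Set.indicator ((Metric.closedBall (0:ℂ) 1) ×ˢ tsupport g)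
          (fun p => F (e.symm p)) p = F (e.symm p)).symm
    rw [heq, integrable_indicator_iff hT]
    exact Measure.integrableOn_of_bounded hTfin hΦm.aestronglyMeasurable
      (ae_of_all _ hbd)
  -- inner integral evaluation
  have hinner : ∀ z' : Fin m → ℂ,
      (∫ w : ℂ, F (e.symm (w, z'))) = π * (g z' * (A z') ^ (-(2:ℝ)))
        - (2 * π * (Real.sqrt (Real.exp 1) - 1) * Real.exp (t/2))
          * (g z' * (A z') ^ (-(3:ℝ))) := by
    intro z'
    simp only [hFkey]
    rw [integral_const_mul]
    by_cases hgz : g z' = 0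
    · simp [hgz]
    · have hApos : 0 < A z' := hA_pos z' (hgsubV (subset_closure hgz))
      rw [inner_eval (A z') t hApos]
      have h2 : (A z') ^ (-(2:ℝ)) = ((A z')^2)⁻¹ := by
        rw [Real.rpow_neg hApos.le, show ((2:ℝ)) = ((2:ℕ):ℝ) by norm_num, Real.rpow_natCast]
      have h3 : (A z') ^ (-(3:ℝ)) = ((A z')^3)⁻¹ := by
        rw [Real.rpow_neg hApos.le, show ((3:ℝ)) = ((3:ℕ):ℝ) by norm_num, Real.rpow_natCast]
      rw [h2, h3]
      ring
  -- integrability of the limit integrands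
  have hint2 : Integrable (fun z' : Fin m → ℂ => g z' * (A z') ^ (-(2:ℝ))) :=
    aux_integrable g hg hgsupp V hVopen hgsubV _
      (hA_cont.rpow_const (fun x hx => Or.inl (hA_pos x hx).ne'))
  have hint3 : Integrable (fun z' : Fin m → ℂ => g z' * (A z') ^ (-(3:ℝ))) :=
    aux_integrable g hg hgsupp V hVopen hgsubV _
      (hA_cont.rpow_const (fun x hx => Or.inl (hA_pos x hx).ne'))
  -- assembling
  have hMP : MeasurePreserving e.symm
      ((volume : Measure ℂ).prod (volume : Measure (Fin m → ℂ)))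
      (volume : Measure (Fin (m+1) → ℂ)) := by
    rw [← MeasureTheory.Measure.volume_eq_prod]
    exact (volume_preserving_piFinSuccAbove (fun _ : Fin (m+1) => ℂ) (Fin.last m)).symm e
  calc (∫ z in S, gext z * Real.exp (-ψ z))
      = ∫ z, F z := by rw [hF_def, integral_indicator hSm]
    _ = ∫ p : ℂ × (Fin m → ℂ), F (e.symm p)
        ∂((volume : Measure ℂ).prod (volume : Measure (Fin m → ℂ))) :=
      (hMP.integral_comp e.symm.measurableEmbedding F).symm
    _ = ∫ z' : Fin m → ℂ, ∫ w : ℂ, F (e.symm (w, z')) :=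
      MeasureTheory.integral_prod_symm _ hΦint
    _ = ∫ z' : Fin m → ℂ, (π * (g z' * (A z') ^ (-(2:ℝ)))
        - (2 * π * (Real.sqrt (Real.exp 1) - 1) * Real.exp (t/2))
          * (g z' * (A z') ^ (-(3:ℝ)))) := by
      simp only [hinner]
    _ = π * (∫ z' : Fin m → ℂ, g z' * (A z') ^ (-(2:ℝ)))
        - 2 * π * (Real.sqrt (Real.exp 1) - 1) * Real.exp (t / 2) *
            (∫ z' : Fin m → ℂ, g z' * (A z') ^ (-(3:ℝ))) := by
      rw [integral_sub (hint2.const_mul _) (hint3.const_mul _),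
        integral_const_mul, integral_const_mul]
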